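/- Let l be an odd positive integer, written l = l₁ l₂² with l₁, l₂ odd and l₁ squarefree. For every complex s with Re(s) > 1, ∑_{m ≥ 1, m odd} d(l₁ m²) m^{−s} ∏_{p | lm} (p/(p+1)) = d(l₁) ζ(s)³ η(s; l), where η(s; l) = ∏_p η_p(s; l) with η_2(s; l) = (1 − 2^{−s})³, and for odd primes p: η_p(s; l) = 1 − (4/(p^s(p+1)))(1 − 1/p^s) + 1/(p^s(p+1)) − 1/p^{2s} − 1/(p^{3s}(p+1)) if p ∤ l; η_p(s; l) = (p/(p+1))(1 − 1/p^s) if p | l₁; and η_p(s; l) = (p/(p+1))(1 − 1/p^{2s}) if p | l but p ∤ l₁. Here d(n) denotes the number of divisors of n, and the Euler product defining η(s; l) converges absolutely for Re(s) > 1/2. -/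

import Mathlib

open scoped BigOperators Classical

noncomputable section

/-- The Euler factor `η_p(s; l)` of Lemma 5.1, where `l = l₁ l₂²` with `l₁` squarefree. -/
def etaP (l l₁ : ℕ) (s : ℂ) (p : ℕ) : ℂ :=
  if p = 2 then (1 - (2 : ℂ) ^ (-s)) ^ 3
  else if p ∣ l₁ then ((p : ℂ) / ((p : ℂ) + 1)) * (1 - (p : ℂ) ^ (-s))
  else if p ∣ l then ((p : ℂ) / ((p : ℂ) + 1)) * (1 - (p : ℂ) ^ (-(2 * s)))
  else
    1 - (4 / ((p : ℂ) ^ s * ((p : ℂ) + 1))) * (1 - (p : ℂ) ^ (-s))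
      + 1 / ((p : ℂ) ^ s * ((p : ℂ) + 1)) - (p : ℂ) ^ (-(2 * s))
      - 1 / ((p : ℂ) ^ (3 * s) * ((p : ℂ) + 1))

namespace Stmt11Aux

/-- local coefficient of the multiplicative function, for `a ≥ 1`. -/
def hcoef (l l₁ : ℕ) (p a : ℕ) : ℂ :=
  if p = 2 then 0
  else if p ∣ l₁ then ((a : ℂ) + 1)
  else if p ∣ l then (2 * (a : ℂ) + 1)
  else (2 * (a : ℂ) + 1) * ((p : ℂ) / ((p : ℂ) + 1))

/-- the normalized multiplicative function -/
def G (l l₁ : ℕ) (s : ℂ) (n : ℕ) : ℂ :=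
  if n = 0 then 0
  else (∏ p ∈ n.primeFactors, hcoef l l₁ p (n.factorization p)) * (n : ℂ) ^ (-s)

lemma G_zero (l l₁ : ℕ) (s : ℂ) : G l l₁ s 0 = 0 := rfl

lemma G_one (l l₁ : ℕ) (s : ℂ) : G l l₁ s 1 = 1 := by
  simp [G]

lemma G_mul (l l₁ : ℕ) (s : ℂ) {m n : ℕ} (h : m.Coprime n) :
    G l l₁ s (m * n) = G l l₁ s m * G l l₁ s n := by
  rcases eq_or_ne m 0 with rfl | hm
  · rcases Nat.coprime_zero_left n |>.1 h with rfl
    simp [G]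
  rcases eq_or_ne n 0 with rfl | hn
  · rcases Nat.coprime_zero_right m |>.1 h with rfl
    simp [G]
  have hmn : m * n ≠ 0 := Nat.mul_ne_zero hm hn
  simp only [G, if_neg hmn, if_neg hm, if_neg hn]
  rw [Nat.primeFactors_mul hm hn, Finset.prod_union (h.disjoint_primeFactors),
    Nat.cast_mul, Complex.natCast_mul_natCast_cpow]
  have h1 : ∀ p ∈ m.primeFactors, hcoef l l₁ p ((m * n).factorization p)
      = hcoef l l₁ p (m.factorization p) := by
    intro p hp
    have : n.factorization p = 0 := by
      apply Nat.factorization_eq_zero_of_not_dvd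
      intro hd
      have hpn : p ∈ n.primeFactors :=
        Nat.mem_primeFactors.2 ⟨Nat.prime_of_mem_primeFactors hp, hd, hn⟩
      exact (Finset.disjoint_left.1 h.disjoint_primeFactors) hp hpn
    rw [Nat.factorization_mul hm hn]
    simp [this]
  have h2 : ∀ p ∈ n.primeFactors, hcoef l l₁ p ((m * n).factorization p)
      = hcoef l l₁ p (n.factorization p) := by
    intro p hp
    have : m.factorization p = 0 := by
      apply Nat.factorization_eq_zero_of_not_dvd
      intro hd
      have hpm : p ∈ m.primeFactors :=
        Nat.mem_primeFactors.2 ⟨Nat.prime_of_mem_primeFactors hp, hd, hm⟩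
      exact (Finset.disjoint_left.1 h.disjoint_primeFactors) hpm hp
    rw [Nat.factorization_mul hm hn]
    simp [this]
  rw [Finset.prod_congr rfl h1, Finset.prod_congr rfl h2]
  ring



lemma natCast_pow_cpow (p : ℕ) (e : ℕ) (s : ℂ) :
    ((p ^ e : ℕ) : ℂ) ^ (-s) = ((p : ℂ) ^ (-s)) ^ e := by
  induction e with
  | zero => simp
  | succ e ih =>
      rw [pow_succ, Nat.cast_mul, Complex.natCast_mul_natCast_cpow, ih, pow_succ]

lemma G_prime_pow (l l₁ : ℕ) (s : ℂ) {p : ℕ} (hp : p.Prime) {e : ℕ} (he : e ≠ 0) :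
    G l l₁ s (p ^ e) = hcoef l l₁ p e * ((p : ℂ) ^ (-s)) ^ e := by
  have hpe : p ^ e ≠ 0 := pow_ne_zero _ hp.pos.ne'
  rw [G, if_neg hpe, natCast_pow_cpow]
  congr 1
  rw [Nat.primeFactors_prime_pow he hp, Finset.prod_singleton,
    hp.factorization_pow, Finsupp.single_eq_same]

-- hcoef norm bound
lemma norm_hcoef_le (l l₁ : ℕ) (p a : ℕ) (hp : 1 ≤ p) :
    ‖hcoef l l₁ p a‖ ≤ 2 * a + 1 := by
  have hp1 : (0:ℝ) < p + 1 := by positivity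
  unfold hcoef
  split_ifs
  · simp; positivity
  · rw [show ((a:ℂ)+1) = ((a+1 : ℕ) : ℂ) by push_cast; ring]
    rw [Complex.norm_natCast]
    push_cast; linarith
  · rw [show (2*(a:ℂ)+1) = ((2*a+1 : ℕ) : ℂ) by push_cast; ring]
    rw [Complex.norm_natCast]; push_cast; linarith
  · rw [norm_mul]
    have h1 : ‖(2*(a:ℂ)+1)‖ = 2*a+1 := by
      rw [show (2*(a:ℂ)+1) = ((2*a+1 : ℕ) : ℂ) by push_cast; ring, Complex.norm_natCast]
      push_cast; ring
    have h2 : ‖(p : ℂ)/((p:ℂ)+1)‖ ≤ 1 := by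
      rw [norm_div]
      rw [show ((p:ℂ)+1) = ((p+1 : ℕ) : ℂ) by push_cast; ring]
      rw [Complex.norm_natCast, Complex.norm_natCast]
      rw [div_le_one (by push_cast; positivity)]
      push_cast; linarith
    calc ‖(2*(a:ℂ)+1)‖ * ‖(p : ℂ)/((p:ℂ)+1)‖ ≤ ‖(2*(a:ℂ)+1)‖ * 1 := by
          apply mul_le_mul_of_nonneg_left h2 (norm_nonneg _)
      _ = 2*a+1 := by rw [mul_one, h1]

open ArithmeticFunction ArithmeticFunction.zeta in
/-- the triple divisor function -/
def D3 : ArithmeticFunction ℕ := ζ * ζ * ζ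

open ArithmeticFunction ArithmeticFunction.zeta in
lemma D3_isMultiplicative : D3.IsMultiplicative :=
  (isMultiplicative_zeta.mul isMultiplicative_zeta).mul isMultiplicative_zeta

open ArithmeticFunction ArithmeticFunction.zeta in
lemma D3_apply_prime_pow {p : ℕ} (hp : p.Prime) (k : ℕ) :
    (2 * k + 1) ≤ D3 (p ^ k) := by
  have h1 : D3 (p ^ k) = ∑ i ∈ (p ^ k).divisors, (ζ * ζ) i := by
    rw [D3, mul_comm ((ζ : ArithmeticFunction ℕ) * ζ) ζ]
    exact zeta_mul_apply
  have h2 : ∀ i ∈ (p ^ k).divisors, (ζ * ζ : ArithmeticFunction ℕ) i = i.divisors.card := by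
    intro i hi
    have hi0 : i ≠ 0 := (Nat.pos_of_mem_divisors hi).ne'
    rw [zeta_mul_apply]
    rw [Finset.card_eq_sum_ones]
    refine Finset.sum_congr rfl fun j hj => ?_
    exact zeta_apply_ne ((Nat.pos_of_mem_divisors hj).ne')
  rw [h1, Finset.sum_congr rfl h2]
  rw [Nat.sum_divisors_prime_pow hp]
  have h3 : ∀ j ∈ Finset.range (k+1), (p ^ j).divisors.card = j + 1 := by
    intro j hj
    rw [Nat.divisors_prime_pow hp, Finset.card_map, Finset.card_range]
  rw [Finset.sum_congr rfl h3]
  have key : ∀ n : ℕ, 2*n+1 ≤ ∑ j ∈ Finset.range (n+1), (j+1) := by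
    intro n
    induction n with
    | zero => simp
    | succ n ih => rw [Finset.sum_range_succ]; omega
  exact key k



lemma norm_G_le (l l₁ : ℕ) (s : ℂ) {n : ℕ} (hn : n ≠ 0) :
    ‖G l l₁ s n‖ ≤ (D3 n : ℝ) * (n : ℝ) ^ (-s.re) := by
  rw [G, if_neg hn, norm_mul]
  have h1 : ‖(n : ℂ) ^ (-s)‖ = (n : ℝ) ^ (-s.re) := by
    rw [Complex.norm_natCast_cpow_of_pos (Nat.pos_of_ne_zero hn), Complex.neg_re]
  rw [h1]
  apply mul_le_mul_of_nonneg_right _ (Real.rpow_nonneg (Nat.cast_nonneg n) _)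
  calc ‖∏ p ∈ n.primeFactors, hcoef l l₁ p (n.factorization p)‖
      ≤ ∏ p ∈ n.primeFactors, ‖hcoef l l₁ p (n.factorization p)‖ := Finset.norm_prod_le n.primeFactors (fun p => hcoef l l₁ p (n.factorization p))
    _ ≤ ∏ p ∈ n.primeFactors, (D3 (p ^ n.factorization p) : ℝ) := by
        apply Finset.prod_le_prod (fun _ _ => norm_nonneg _)
        intro p hp
        have hprime := Nat.prime_of_mem_primeFactors hp
        refine (norm_hcoef_le l l₁ p _ hprime.one_lt.le).trans ?_
        exact_mod_cast D3_apply_prime_pow hprime _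
    _ = (D3 n : ℝ) := by
        rw [D3_isMultiplicative.multiplicative_factorization D3 hn]
        rw [Nat.factorization, Finsupp.prod]
        push_cast
        rfl

open scoped LSeries.notation in
open LSeries in
lemma summable_D3 {σ : ℝ} (hσ : 1 < σ) :
    Summable (fun n : ℕ => (D3 n : ℝ) * (n : ℝ) ^ (-σ)) := by
  have hσ' : 1 < (σ : ℂ).re := by simpa using hσ
  set Z : ℕ → ℂ := fun n => ((ArithmeticFunction.zeta n : ℕ) : ℂ) with hZ
  have hζ : LSeriesSummable Z (σ : ℂ) :=
    ArithmeticFunction.LSeriesSummable_zeta_iff.mpr hσ'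
  have h3 : LSeriesSummable (Z ⍟ Z ⍟ Z) (σ : ℂ) := (hζ.convolution hζ).convolution hζ
  have heq : Z ⍟ Z ⍟ Z = fun n => ((D3 n : ℕ) : ℂ) := by
    have hz : Z = ⇑((ArithmeticFunction.zeta : ArithmeticFunction ℕ) : ArithmeticFunction ℂ) := by
      funext n; rw [hZ, ArithmeticFunction.natCoe_apply]
    rw [hz, ArithmeticFunction.coe_mul, ArithmeticFunction.coe_mul, D3]
    funext n
    rw [← ArithmeticFunction.natCoe_mul, ← ArithmeticFunction.natCoe_mul,
      ArithmeticFunction.natCoe_apply]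
  rw [heq] at h3
  have h4 : Summable (fun n => (term (fun n => ((D3 n : ℕ) : ℂ)) (σ : ℂ) n).re) :=
    (RCLike.hasSum_re ℂ h3.hasSum).summable
  apply h4.congr
  intro n
  rcases eq_or_ne n 0 with rfl | hn
  · simp [term, ArithmeticFunction.map_zero]
  · rw [term_of_ne_zero hn]
    have hcast : ((n : ℂ) ^ (σ : ℂ)) = (((n : ℝ) ^ σ : ℝ) : ℂ) := by
      rw [Complex.ofReal_cpow (Nat.cast_nonneg n), Complex.ofReal_natCast]
    rw [hcast, ← Complex.ofReal_natCast (D3 n), ← Complex.ofReal_div, Complex.ofReal_re,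
      div_eq_mul_inv, ← Real.rpow_neg (Nat.cast_nonneg n)]

lemma summable_norm_G (l l₁ : ℕ) {s : ℂ} (hs : 1 < s.re) :
    Summable (fun n => ‖G l l₁ s n‖) := by
  apply Summable.of_nonneg_of_le (fun _ => norm_nonneg _) _ (summable_D3 hs)
  intro n
  rcases eq_or_ne n 0 with rfl | hn
  · rw [show G l l₁ s 0 = 0 from rfl, norm_zero]
    positivity
  · exact norm_G_le l l₁ s hn



lemma cast_add_one_ne (p : ℕ) : ((p : ℂ) + 1) ≠ 0 := by
  have : ((p : ℂ) + 1) = ((p + 1 : ℕ) : ℂ) := by push_cast; ring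
  rw [this, Nat.cast_ne_zero]
  omega

lemma norm_x {p : ℕ} (hp : 2 ≤ p) {s : ℂ} :
    ‖(p : ℂ) ^ (-s)‖ = (p : ℝ) ^ (-s.re) := by
  rw [Complex.norm_natCast_cpow_of_pos (by omega), Complex.neg_re]

lemma norm_x_lt_one {p : ℕ} (hp : 2 ≤ p) {s : ℂ} (hσ : 0 < s.re) :
    ‖(p : ℂ) ^ (-s)‖ < 1 := by
  rw [norm_x hp]
  apply Real.rpow_lt_one_of_one_lt_of_neg
  · exact_mod_cast by omega
  · linarith

lemma cpow_neg_two_mul {p : ℕ} (hp : p ≠ 0) (s : ℂ) :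
    (p : ℂ) ^ (-(2 * s)) = ((p : ℂ) ^ (-s)) ^ 2 := by
  have hp0 : (p : ℂ) ≠ 0 := Nat.cast_ne_zero.mpr hp
  rw [show -(2 * s) = -s + -s by ring, Complex.cpow_add _ _ hp0, sq]

lemma cpow_three_mul {p : ℕ} (hp : p ≠ 0) (s : ℂ) :
    (p : ℂ) ^ (3 * s) = ((p : ℂ) ^ s) ^ 3 := by
  have hp0 : (p : ℂ) ≠ 0 := Nat.cast_ne_zero.mpr hp
  rw [show (3 : ℂ) * s = s + (s + s) by ring, Complex.cpow_add _ _ hp0,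
    Complex.cpow_add _ _ hp0]
  ring

lemma etaP_generic {l l₁ p : ℕ} (hp : p ≠ 0) (h2 : p ≠ 2) (h1 : ¬p ∣ l₁) (hl : ¬p ∣ l)
    (s : ℂ) :
    etaP l l₁ s p = 1 - 4 * ((p : ℂ) ^ (-s)) * (1 - (p : ℂ) ^ (-s)) / ((p : ℂ) + 1)
      + ((p : ℂ) ^ (-s)) / ((p : ℂ) + 1) - ((p : ℂ) ^ (-s)) ^ 2
      - ((p : ℂ) ^ (-s)) ^ 3 / ((p : ℂ) + 1) := by
  have hp0 : (p : ℂ) ≠ 0 := Nat.cast_ne_zero.mpr hp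
  have hy : (p : ℂ) ^ s ≠ 0 := by
    rw [Ne, Complex.cpow_eq_zero_iff]
    tauto
  have hx : (p : ℂ) ^ (-s) = ((p : ℂ) ^ s)⁻¹ := by rw [Complex.cpow_neg]
  rw [etaP, if_neg h2, if_neg h1, if_neg hl, cpow_neg_two_mul hp, cpow_three_mul hp, hx]
  have hq := cast_add_one_ne p
  field_simp

lemma etaP_sub_one_bound {l l₁ p : ℕ} (hp : p.Prime) (h2 : p ≠ 2) (h1 : ¬p ∣ l₁)
    (hl : ¬p ∣ l) {s : ℂ} (hσ : 0 < s.re) :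
    ‖etaP l l₁ s p - 1‖ ≤ 11 * (p : ℝ) ^ (-min (s.re + 1) (2 * s.re)) := by
  have hp2 : 2 ≤ p := hp.two_le
  have hpR : (1 : ℝ) < p := by exact_mod_cast hp.one_lt
  have hp0R : (0 : ℝ) < p := by linarith
  set x := (p : ℂ) ^ (-s) with hxdef
  set X := (p : ℝ) ^ (-s.re) with hXdef
  have hnx : ‖x‖ = X := norm_x hp2
  have hX0 : 0 ≤ X := Real.rpow_nonneg (by positivity) _
  have hX1 : X ≤ 1 := Real.rpow_le_one_of_one_le_of_nonpos (by linarith) (by linarith)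
  have hsub : etaP l l₁ s p - 1 = (x - 4 * x * (1 - x) - x ^ 3) / ((p : ℂ) + 1) - x ^ 2 := by
    rw [etaP_generic hp.pos.ne' h2 h1 hl s]
    ring
  have hnum : ‖x - 4 * x * (1 - x) - x ^ 3‖ ≤ 10 * X := by
    have e1 : ‖1 - x‖ ≤ 2 := by
      calc ‖1 - x‖ ≤ ‖(1 : ℂ)‖ + ‖x‖ := norm_sub_le _ _
        _ ≤ 1 + 1 := by rw [norm_one, hnx]; linarith
        _ = 2 := by norm_num
    have e2 : ‖4 * x * (1 - x)‖ ≤ 8 * X := by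
      rw [norm_mul, norm_mul]
      have : ‖(4 : ℂ)‖ = 4 := by norm_num
      rw [this, hnx]
      nlinarith [norm_nonneg (1 - x)]
    have e3 : ‖x ^ 3‖ ≤ X := by
      rw [norm_pow, hnx]
      calc X ^ 3 ≤ X ^ 1 := pow_le_pow_of_le_one hX0 hX1 (by norm_num)
        _ = X := pow_one X
    calc ‖x - 4 * x * (1 - x) - x ^ 3‖ ≤ ‖x - 4 * x * (1 - x)‖ + ‖x ^ 3‖ := norm_sub_le _ _
      _ ≤ ‖x‖ + ‖4 * x * (1 - x)‖ + ‖x ^ 3‖ := by linarith [norm_sub_le x (4 * x * (1 - x))]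
      _ ≤ X + 8 * X + X := by rw [hnx] at *; linarith
      _ = 10 * X := by ring
  have hPnorm : ‖((p : ℂ) + 1)‖ = (p : ℝ) + 1 := by
    have : ((p : ℂ) + 1) = (((p : ℝ) + 1 : ℝ) : ℂ) := by push_cast; ring
    rw [this, Complex.norm_real, Real.norm_eq_abs, abs_of_pos (by positivity)]
  set r := min (s.re + 1) (2 * s.re) with hrdef
  have c1 : X / ((p : ℝ) + 1) ≤ X / (p : ℝ) :=
    div_le_div_of_nonneg_left hX0 hp0R (by linarith)
  have c2 : X / (p : ℝ) = (p : ℝ) ^ (-(s.re + 1)) := by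
    rw [hXdef, div_eq_mul_inv, ← Real.rpow_neg_one (p : ℝ), ← Real.rpow_add hp0R,
      show -s.re + -1 = -(s.re + 1) by ring]
  have c3 : (p : ℝ) ^ (-(s.re + 1)) ≤ (p : ℝ) ^ (-r) :=
    (Real.rpow_le_rpow_left_iff hpR).mpr (by have := min_le_left (s.re + 1) (2 * s.re); linarith)
  have key1 : X / ((p : ℝ) + 1) ≤ (p : ℝ) ^ (-r) := by
    calc X / ((p : ℝ) + 1) ≤ X / (p : ℝ) := c1
      _ = (p : ℝ) ^ (-(s.re + 1)) := c2
      _ ≤ (p : ℝ) ^ (-r) := c3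
  have key2 : X ^ 2 ≤ (p : ℝ) ^ (-r) := by
    have e : X ^ 2 = (p : ℝ) ^ (-(2 * s.re)) := by
      rw [hXdef, sq, ← Real.rpow_add hp0R, show -s.re + -s.re = -(2 * s.re) by ring]
    rw [e]
    exact (Real.rpow_le_rpow_left_iff hpR).mpr
      (by have := min_le_right (s.re + 1) (2 * s.re); linarith)
  have hP1 : (0 : ℝ) < (p : ℝ) + 1 := by linarith
  calc ‖etaP l l₁ s p - 1‖
      = ‖(x - 4 * x * (1 - x) - x ^ 3) / ((p : ℂ) + 1) - x ^ 2‖ := by rw [hsub]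
    _ ≤ ‖(x - 4 * x * (1 - x) - x ^ 3) / ((p : ℂ) + 1)‖ + ‖x ^ 2‖ := norm_sub_le _ _
    _ = ‖x - 4 * x * (1 - x) - x ^ 3‖ / ((p : ℝ) + 1) + X ^ 2 := by
        rw [norm_div, hPnorm, norm_pow, hnx]
    _ ≤ 10 * X / ((p : ℝ) + 1) + X ^ 2 := by gcongr
    _ = 10 * (X / ((p : ℝ) + 1)) + X ^ 2 := by ring
    _ ≤ 10 * (p : ℝ) ^ (-r) + (p : ℝ) ^ (-r) := by
        have := key1
        have := key2
        nlinarith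
    _ = 11 * (p : ℝ) ^ (-r) := by ring

lemma one_sub_cpow_ne {p : ℕ} (hp : 2 ≤ p) {w : ℂ} (hw : ‖(p:ℂ) ^ w‖ < 1) :
    (1 : ℂ) - (p : ℂ) ^ w ≠ 0 := by
  intro h
  have : (p : ℂ) ^ w = 1 := by linear_combination -h
  rw [this, norm_one] at hw
  exact lt_irrefl 1 hw

lemma etaP_ne_zero {l l₁ p : ℕ} (hp : p.Prime) (hdvd : l₁ ∣ l) {s : ℂ} (hσ : 0 < s.re) :
    etaP l l₁ s p ≠ 0 := by
  have hp2 : 2 ≤ p := hp.two_le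
  have hpR : (1 : ℝ) < p := by exact_mod_cast hp.one_lt
  have hp0 : (p : ℂ) ≠ 0 := Nat.cast_ne_zero.mpr hp.pos.ne'
  have hq := cast_add_one_ne p
  have hx1 : ‖(p : ℂ) ^ (-s)‖ < 1 := norm_x_lt_one hp2 hσ
  have hrp : (p : ℂ) / ((p : ℂ) + 1) ≠ 0 := div_ne_zero hp0 hq
  by_cases h2 : p = 2
  · subst h2
    rw [etaP, if_pos rfl]
    apply pow_ne_zero
    exact one_sub_cpow_ne (le_refl 2) (by exact_mod_cast hx1)
  by_cases h1 : p ∣ l₁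
  · rw [etaP, if_neg h2, if_pos h1]
    exact mul_ne_zero hrp (one_sub_cpow_ne hp2 hx1)
  by_cases hl : p ∣ l
  · rw [etaP, if_neg h2, if_neg h1, if_pos hl]
    refine mul_ne_zero hrp (one_sub_cpow_ne hp2 ?_)
    rw [Complex.norm_natCast_cpow_of_pos hp.pos]
    apply Real.rpow_lt_one_of_one_lt_of_neg hpR
    have : (-(2 * s)).re = -(2 * s.re) := by simp
    rw [this]
    linarith
  -- generic case
  set x := (p : ℂ) ^ (-s) with hxdef
  have hfac : etaP l l₁ s p
      = (1 - x) * (x ^ 2 + ((p : ℂ) - 2) * x + ((p : ℂ) + 1)) / ((p : ℂ) + 1) := by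
    rw [etaP_generic hp.pos.ne' h2 h1 hl s]
    field_simp
    ring
  rw [hfac]
  apply div_ne_zero _ hq
  apply mul_ne_zero (one_sub_cpow_ne hp2 hx1)
  intro h
  have h3 : (p : ℂ) + 1 = -(x ^ 2 + ((p : ℂ) - 2) * x) := by linear_combination h
  have hp3 : 3 ≤ p := by
    rcases Nat.lt_or_ge p 3 with h | h
    · interval_cases p <;> simp_all
    · exact h
  have hnorm2 : ‖(p : ℂ) - 2‖ = (p : ℝ) - 2 := by
    have : ((p : ℂ) - 2) = (((p : ℝ) - 2 : ℝ) : ℂ) := by push_cast; ring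
    rw [this, Complex.norm_real, Real.norm_eq_abs, abs_of_nonneg (by exact_mod_cast by omega)]
  have hPnorm : ‖((p : ℂ) + 1)‖ = (p : ℝ) + 1 := by
    have : ((p : ℂ) + 1) = (((p : ℝ) + 1 : ℝ) : ℂ) := by push_cast; ring
    rw [this, Complex.norm_real, Real.norm_eq_abs, abs_of_pos (by positivity)]
  have hb : ‖x ^ 2 + ((p : ℂ) - 2) * x‖ ≤ ‖x‖ ^ 2 + ((p : ℝ) - 2) * ‖x‖ := by
    calc ‖x ^ 2 + ((p : ℂ) - 2) * x‖ ≤ ‖x ^ 2‖ + ‖((p : ℂ) - 2) * x‖ := norm_add_le _ _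
      _ = ‖x‖ ^ 2 + ((p : ℝ) - 2) * ‖x‖ := by rw [norm_pow, norm_mul, hnorm2]
  have hcontra : (p : ℝ) + 1 ≤ ‖x‖ ^ 2 + ((p : ℝ) - 2) * ‖x‖ := by
    rw [← hPnorm, h3, norm_neg]
    exact hb
  have hxnn : 0 ≤ ‖x‖ := norm_nonneg x
  have hpm2 : (0 : ℝ) ≤ (p : ℝ) - 2 := by
    have : (2 : ℝ) ≤ p := by exact_mod_cast hp2
    linarith
  nlinarith

lemma multipliable_etaP (l l₁ : ℕ) (hl : l ≠ 0) (hdvd : l₁ ∣ l) {s : ℂ}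
    (hσ : 1 / 2 < s.re) :
    Multipliable (fun p : Nat.Primes => etaP l l₁ s (p : ℕ)) := by
  have hσ0 : 0 < s.re := by linarith
  set r := min (s.re + 1) (2 * s.re) with hrdef
  have hr1 : 1 < r := by
    rw [hrdef]
    apply lt_min <;> linarith
  have hsum_r : Summable (fun p : Nat.Primes => 11 * ((p : ℕ) : ℝ) ^ (-r)) :=
    (Nat.Primes.summable_rpow.mpr (by linarith)).mul_left 11
  apply Complex.multipliable_of_summable_log
  apply Summable.of_norm_bounded_eventually (g := fun p : Nat.Primes => 3 / 2 * (11 * ((p : ℕ) : ℝ) ^ (-r)))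
    (hsum_r.mul_left (3 / 2))
  have hfin1 : {p : Nat.Primes | ((p : ℕ) : ℕ) ∣ 2 * l}.Finite := by
    have h := Set.Finite.preimage (f := fun p : Nat.Primes => (p : ℕ))
      (s := {n : ℕ | n ∣ 2 * l}) (Nat.Primes.coe_nat_injective.injOn)
      (Set.Finite.subset (Set.finite_Iic (2 * l)) (fun n hn => Nat.le_of_dvd (by omega) hn))
    exact h
  have hev1 : ∀ᶠ p : Nat.Primes in Filter.cofinite, ¬((p : ℕ) ∣ 2 * l) :=
    Set.Finite.eventually_cofinite_notMem hfin1
  have hev2 : ∀ᶠ p : Nat.Primes in Filter.cofinite, 11 * ((p : ℕ) : ℝ) ^ (-r) ≤ 1 / 2 := by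
    have ht := hsum_r.tendsto_cofinite_zero
    have := ht.eventually_lt_const (show (0:ℝ) < 1/2 by norm_num)
    exact this.mono fun p hp => le_of_lt hp
  filter_upwards [hev1, hev2] with p hdl hsmall
  have hprime : (p : ℕ).Prime := p.2
  have h2 : (p : ℕ) ≠ 2 := fun h => hdl (h ▸ ⟨l, rfl⟩)
  have hnl : ¬(p : ℕ) ∣ l := fun h => hdl (h.mul_left 2)
  have hnl1 : ¬(p : ℕ) ∣ l₁ := fun h => hnl (h.trans hdvd)
  have hbound := etaP_sub_one_bound (l := l) (l₁ := l₁) hprime h2 hnl1 hnl hσ0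
  rw [← hrdef] at hbound
  have hsmall2 : ‖etaP l l₁ s (p : ℕ) - 1‖ ≤ 1 / 2 := hbound.trans hsmall
  calc ‖Complex.log (etaP l l₁ s (p : ℕ))‖
      = ‖Complex.log (1 + (etaP l l₁ s (p : ℕ) - 1))‖ := by rw [add_sub_cancel]
    _ ≤ 3 / 2 * ‖etaP l l₁ s (p : ℕ) - 1‖ := Complex.norm_log_one_add_half_le_self hsmall2
    _ ≤ 3 / 2 * (11 * ((p : ℕ) : ℝ) ^ (-r)) := by
        have := hbound
        nlinarith [Real.rpow_nonneg (show (0:ℝ) ≤ ((p:ℕ):ℝ) by positivity) (-r)]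


lemma perprime (l l₁ l₂ : ℕ) (hl₁ : Odd l₁) (hsf : Squarefree l₁) (hfact : l = l₁ * l₂ ^ 2)
    (hl0 : l ≠ 0) (hl₁0 : l₁ ≠ 0) {m : ℕ} (hm0 : m ≠ 0) {p : ℕ} (hp : p.Prime)
    (h2 : p ≠ 2) (hdl : p ∣ l * m) :
    ((l₁.factorization p + 2 * m.factorization p + 1 : ℕ) : ℂ) * ((p : ℂ) / ((p : ℂ) + 1))
      = ((l₁.factorization p + 1 : ℕ) : ℂ)
        * (if p ∣ l then ((p : ℂ) / ((p : ℂ) + 1)) else 1)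
        * (if p ∣ m then hcoef l l₁ p (m.factorization p) else 1) := by
  have hdvd₁ : l₁ ∣ l := hfact ▸ Dvd.intro _ rfl
  by_cases hpl₁ : p ∣ l₁
  · have ha : l₁.factorization p = 1 :=
      le_antisymm (hsf.natFactorization_le_one p) (hp.factorization_pos_of_dvd hl₁0 hpl₁)
    have hpl : p ∣ l := hpl₁.trans hdvd₁
    rw [ha, if_pos hpl]
    by_cases hpm : p ∣ m
    · rw [if_pos hpm, hcoef, if_neg h2, if_pos hpl₁]
      push_cast; ring
    · rw [if_neg hpm, Nat.factorization_eq_zero_of_not_dvd hpm]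
      push_cast; ring
  · have ha : l₁.factorization p = 0 := Nat.factorization_eq_zero_of_not_dvd hpl₁
    rw [ha]
    by_cases hpl : p ∣ l
    · rw [if_pos hpl]
      by_cases hpm : p ∣ m
      · rw [if_pos hpm, hcoef, if_neg h2, if_neg hpl₁, if_pos hpl]
        push_cast; ring
      · rw [if_neg hpm, Nat.factorization_eq_zero_of_not_dvd hpm]
        push_cast; ring
    · have hpm : p ∣ m := by
        rcases (Nat.Prime.dvd_mul hp).mp hdl with h | h
        · exact absurd h hpl
        · exact h
      rw [if_neg hpl, if_pos hpm, hcoef, if_neg h2, if_neg hpl₁, if_neg hpl]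
      push_cast; ring

lemma f_eq (l l₁ l₂ : ℕ) (hl₁ : Odd l₁) (hl₂ : Odd l₂) (hsf : Squarefree l₁)
    (hfact : l = l₁ * l₂ ^ 2) (s : ℂ) (m : ℕ) :
    (if Odd m then ((l₁ * m ^ 2).divisors.card : ℂ) * (m : ℂ) ^ (-s) *
        ∏ p ∈ (l * m).primeFactors, ((p : ℂ) / ((p : ℂ) + 1))
      else 0)
    = ((l₁.divisors.card : ℂ) * ∏ p ∈ l.primeFactors, ((p : ℂ) / ((p : ℂ) + 1)))
        * G l l₁ s m := by
  have hl₁0 : l₁ ≠ 0 := by rintro rfl; simp at hl₁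
  have hl₂0 : l₂ ≠ 0 := by rintro rfl; simp at hl₂
  have hlodd : Odd l := hfact ▸ hl₁.mul (hl₂.pow)
  have hl0 : l ≠ 0 := by rintro rfl; simp at hlodd
  rcases eq_or_ne m 0 with rfl | hm0
  · simp [G]
  by_cases hmodd : Odd m
  swap
  · rw [if_neg hmodd]
    have h2m : 2 ∣ m := (Nat.not_odd_iff_even.mp hmodd).two_dvd
    have h2mem : 2 ∈ m.primeFactors := Nat.mem_primeFactors.mpr ⟨Nat.prime_two, h2m, hm0⟩
    have : G l l₁ s m = 0 := by
      rw [G, if_neg hm0, Finset.prod_eq_zero h2mem (by rw [hcoef, if_pos rfl]), zero_mul]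
    rw [this, mul_zero]
  rw [if_pos hmodd]
  have hlm0 : l * m ≠ 0 := Nat.mul_ne_zero hl0 hm0
  have hlm_odd : Odd (l * m) := hlodd.mul hmodd
  have hdvd₁ : l₁ ∣ l := hfact ▸ Dvd.intro _ rfl
  set T := (l * m).primeFactors with hTdef
  have hT : T = l.primeFactors ∪ m.primeFactors := Nat.primeFactors_mul hl0 hm0
  have hsubl : l.primeFactors ⊆ T := hT ▸ Finset.subset_union_left
  have hsubm : m.primeFactors ⊆ T := hT ▸ Finset.subset_union_right
  have hsubl₁ : l₁.primeFactors ⊆ T := (Nat.primeFactors_mono hdvd₁ hl0).trans hsubl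
  have hfacz : ∀ p, (l₁ * m ^ 2).factorization p
      = l₁.factorization p + 2 * m.factorization p := by
    intro p
    rw [Nat.factorization_mul hl₁0 (pow_ne_zero 2 hm0), Nat.factorization_pow]
    simp [two_mul]
  -- Step A
  have hA : ((l₁ * m ^ 2).divisors.card : ℂ)
      = ∏ p ∈ T, ((l₁.factorization p + 2 * m.factorization p + 1 : ℕ) : ℂ) := by
    have h0 : l₁ * m ^ 2 ≠ 0 := Nat.mul_ne_zero hl₁0 (pow_ne_zero 2 hm0)
    rw [Nat.card_divisors h0, Nat.cast_prod]
    have hpf : (l₁ * m ^ 2).primeFactors = l₁.primeFactors ∪ m.primeFactors := by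
      rw [Nat.primeFactors_mul hl₁0 (pow_ne_zero 2 hm0), Nat.primeFactors_pow m two_ne_zero]
    have hsub : (l₁ * m ^ 2).primeFactors ⊆ T := by
      rw [hpf]
      exact Finset.union_subset hsubl₁ hsubm
    refine (Finset.prod_congr rfl fun p _ => ?_).trans (Finset.prod_subset hsub fun p hpT hpn => ?_)
    · rw [hfacz p]
    · have hz : (l₁ * m ^ 2).factorization p = 0 := by
        rwa [← Finsupp.notMem_support_iff, Nat.support_factorization]
      rw [hfacz p] at hz
      rw [hz]
      norm_num
  have hB : ((l₁.divisors.card : ℂ))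
      = ∏ p ∈ T, ((l₁.factorization p + 1 : ℕ) : ℂ) := by
    rw [Nat.card_divisors hl₁0, Nat.cast_prod]
    refine Finset.prod_subset hsubl₁ fun p hpT hpn => ?_
    have hz : l₁.factorization p = 0 := by
      rwa [← Finsupp.notMem_support_iff, Nat.support_factorization]
    rw [hz]; norm_num
  have hC : (∏ p ∈ l.primeFactors, ((p : ℂ) / ((p : ℂ) + 1)))
      = ∏ p ∈ T, (if p ∣ l then ((p : ℂ) / ((p : ℂ) + 1)) else 1) := by
    refine (Finset.prod_congr rfl fun p hp => ?_).trans
      (Finset.prod_subset hsubl fun p hpT hpn => ?_)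
    · rw [if_pos (Nat.dvd_of_mem_primeFactors hp)]
    · rw [if_neg (fun hdvd => hpn (Nat.mem_primeFactors.mpr
        ⟨Nat.prime_of_mem_primeFactors hpT, hdvd, hl0⟩))]
  have hD : (∏ p ∈ m.primeFactors, hcoef l l₁ p (m.factorization p))
      = ∏ p ∈ T, (if p ∣ m then hcoef l l₁ p (m.factorization p) else 1) := by
    refine (Finset.prod_congr rfl fun p hp => ?_).trans
      (Finset.prod_subset hsubm fun p hpT hpn => ?_)
    · rw [if_pos (Nat.dvd_of_mem_primeFactors hp)]
    · rw [if_neg (fun hdvd => hpn (Nat.mem_primeFactors.mpr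
        ⟨Nat.prime_of_mem_primeFactors hpT, hdvd, hm0⟩))]
  have key : ((l₁ * m ^ 2).divisors.card : ℂ) * ∏ p ∈ T, ((p : ℂ) / ((p : ℂ) + 1))
      = ((l₁.divisors.card : ℂ) * ∏ p ∈ l.primeFactors, ((p : ℂ) / ((p : ℂ) + 1)))
        * ∏ p ∈ m.primeFactors, hcoef l l₁ p (m.factorization p) := by
    rw [hA, hB, hC, hD, ← Finset.prod_mul_distrib, mul_assoc, ← Finset.prod_mul_distrib,
      ← Finset.prod_mul_distrib]
    refine Finset.prod_congr rfl fun p hpT => ?_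
    have hp := Nat.prime_of_mem_primeFactors hpT
    have hdl := Nat.dvd_of_mem_primeFactors hpT
    have h2 : p ≠ 2 := by
      rintro rfl
      exact (Nat.two_dvd_ne_zero.mpr (Nat.odd_iff.mp hlm_odd)) hdl
    rw [← mul_assoc]
    exact perprime l l₁ l₂ hl₁ hsf hfact hl0 hl₁0 hm0 hp h2 hdl
  rw [G, if_neg hm0]
  linear_combination ((m : ℂ) ^ (-s)) * key


section LocalSums

variable {l l₁ : ℕ} {s : ℂ}

lemma sum_geom21 {x : ℂ} (hx : ‖x‖ < 1) :
    ∑' e : ℕ, (2 * (e : ℂ) + 1) * x ^ e = 2 * (x / (1 - x) ^ 2) + (1 - x)⁻¹ := by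
  have s1 : Summable (fun n : ℕ => (n : ℂ) * x ^ n) := by
    have := summable_pow_mul_geometric_of_norm_lt_one 1 hx
    simpa using this
  have s0 : Summable (fun n : ℕ => x ^ n) := summable_geometric_of_norm_lt_one hx
  have h : ∀ e : ℕ, (2 * (e : ℂ) + 1) * x ^ e = 2 * ((e : ℂ) * x ^ e) + x ^ e := by
    intro e; ring
  rw [tsum_congr h, Summable.tsum_add (s1.mul_left 2) s0, tsum_mul_left,
    tsum_coe_mul_geometric_of_norm_lt_one hx, tsum_geometric_of_norm_lt_one hx]

lemma sum_geom11 {x : ℂ} (hx : ‖x‖ < 1) :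
    ∑' e : ℕ, ((e : ℂ) + 1) * x ^ e = x / (1 - x) ^ 2 + (1 - x)⁻¹ := by
  have s1 : Summable (fun n : ℕ => (n : ℂ) * x ^ n) := by
    have := summable_pow_mul_geometric_of_norm_lt_one 1 hx
    simpa using this
  have s0 : Summable (fun n : ℕ => x ^ n) := summable_geometric_of_norm_lt_one hx
  have h : ∀ e : ℕ, ((e : ℂ) + 1) * x ^ e = (e : ℂ) * x ^ e + x ^ e := by
    intro e; ring
  rw [tsum_congr h, Summable.tsum_add s1 s0,
    tsum_coe_mul_geometric_of_norm_lt_one hx, tsum_geometric_of_norm_lt_one hx]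

lemma local_two (l l₁ : ℕ) (s : ℂ) :
    ∑' e : ℕ, G l l₁ s (2 ^ e) = 1 := by
  have h : ∀ e : ℕ, G l l₁ s (2 ^ e) = if e = 0 then 1 else 0 := by
    intro e
    rcases eq_or_ne e 0 with rfl | he
    · simpa using G_one l l₁ s
    · rw [if_neg he, G_prime_pow l l₁ s Nat.prime_two he, hcoef, if_pos rfl, zero_mul]
  rw [tsum_congr h, tsum_eq_single 0 (fun b hb => if_neg hb), if_pos rfl]

lemma local_l₁ {p : ℕ} (hp : p.Prime) (h2 : p ≠ 2) (h1 : p ∣ l₁) (hσ : 0 < s.re) :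
    ∑' e : ℕ, G l l₁ s (p ^ e)
      = (p : ℂ) ^ (-s) / (1 - (p : ℂ) ^ (-s)) ^ 2 + (1 - (p : ℂ) ^ (-s))⁻¹ := by
  have hx := norm_x_lt_one hp.two_le (s := s) hσ
  have h : ∀ e : ℕ, G l l₁ s (p ^ e) = ((e : ℂ) + 1) * ((p : ℂ) ^ (-s)) ^ e := by
    intro e
    rcases eq_or_ne e 0 with rfl | he
    · simpa using G_one l l₁ s
    · rw [G_prime_pow l l₁ s hp he, hcoef, if_neg h2, if_pos h1]
  rw [tsum_congr h, sum_geom11 hx]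

lemma local_l {p : ℕ} (hp : p.Prime) (h2 : p ≠ 2) (h1 : ¬p ∣ l₁) (hl : p ∣ l)
    (hσ : 0 < s.re) :
    ∑' e : ℕ, G l l₁ s (p ^ e)
      = 2 * ((p : ℂ) ^ (-s) / (1 - (p : ℂ) ^ (-s)) ^ 2) + (1 - (p : ℂ) ^ (-s))⁻¹ := by
  have hx := norm_x_lt_one hp.two_le (s := s) hσ
  have h : ∀ e : ℕ, G l l₁ s (p ^ e) = (2 * (e : ℂ) + 1) * ((p : ℂ) ^ (-s)) ^ e := by
    intro e
    rcases eq_or_ne e 0 with rfl | he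
    · simpa using G_one l l₁ s
    · rw [G_prime_pow l l₁ s hp he, hcoef, if_neg h2, if_neg h1, if_pos hl]
  rw [tsum_congr h, sum_geom21 hx]

lemma local_gen {p : ℕ} (hp : p.Prime) (h2 : p ≠ 2) (h1 : ¬p ∣ l₁) (hl : ¬p ∣ l)
    (hσ : 0 < s.re) :
    ∑' e : ℕ, G l l₁ s (p ^ e)
      = ((p : ℂ) / ((p : ℂ) + 1))
          * (2 * ((p : ℂ) ^ (-s) / (1 - (p : ℂ) ^ (-s)) ^ 2) + (1 - (p : ℂ) ^ (-s))⁻¹)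
        + 1 / ((p : ℂ) + 1) := by
  have hx := norm_x_lt_one hp.two_le (s := s) hσ
  have hq := cast_add_one_ne p
  set x := (p : ℂ) ^ (-s) with hxdef
  have h : ∀ e : ℕ, G l l₁ s (p ^ e)
      = ((p : ℂ) / ((p : ℂ) + 1)) * ((2 * (e : ℂ) + 1) * x ^ e)
        + (if e = 0 then 1 / ((p : ℂ) + 1) else 0) := by
    intro e
    rcases eq_or_ne e 0 with rfl | he
    · rw [pow_zero, G_one l l₁ s, if_pos rfl]
      simp only [Nat.cast_zero, pow_zero]
      field_simp
      ring
    · rw [if_neg he, add_zero, G_prime_pow l l₁ s hp he, hcoef, if_neg h2, if_neg h1,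
        if_neg hl]
      ring
  have s21 : Summable (fun e : ℕ => (2 * (e : ℂ) + 1) * x ^ e) := by
    have s1 : Summable (fun n : ℕ => (n : ℂ) * x ^ n) := by
      have := summable_pow_mul_geometric_of_norm_lt_one 1 hx
      simpa using this
    have s0 : Summable (fun n : ℕ => x ^ n) := summable_geometric_of_norm_lt_one hx
    have := (s1.mul_left 2).add s0
    apply this.congr
    intro e; ring
  have ssing : Summable (fun e : ℕ => if e = 0 then 1 / ((p : ℂ) + 1) else 0) :=
    summable_of_ne_finset_zero (s := {0}) (fun b hb => if_neg (by simpa using hb))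
  rw [tsum_congr h, Summable.tsum_add (s21.mul_left _) ssing, tsum_mul_left, sum_geom21 hx,
    tsum_eq_single 0 (fun b hb => if_neg hb), if_pos rfl]

end LocalSums

set_option maxHeartbeats 1000000 in
lemma local_identity (l l₁ : ℕ) (hlodd : Odd l) (hdvd₁ : l₁ ∣ l) {s : ℂ} (hs : 1 < s.re)
    {p : ℕ} (hp : p.Prime) :
    ((1 - (p : ℂ) ^ (-s))⁻¹) ^ 3 * etaP l l₁ s p
      = (if p ∣ l then ((p : ℂ) / ((p : ℂ) + 1)) else 1) * ∑' e : ℕ, G l l₁ s (p ^ e) := by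
  have hσ : 0 < s.re := by linarith
  have hx1 : ‖(p : ℂ) ^ (-s)‖ < 1 := norm_x_lt_one hp.two_le hσ
  have hne : (1 : ℂ) - (p : ℂ) ^ (-s) ≠ 0 := one_sub_cpow_ne hp.two_le hx1
  have hq := cast_add_one_ne p
  by_cases h2 : p = 2
  · subst h2
    have hnl : ¬(2 ∣ l) := fun h => (Nat.two_dvd_ne_zero.mpr (Nat.odd_iff.mp hlodd)) h
    have hne2 : (1 : ℂ) - (2 : ℂ) ^ (-s) ≠ 0 := by exact_mod_cast hne
    rw [local_two, etaP, if_pos rfl, if_neg hnl, mul_one, inv_pow]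
    field_simp
    norm_num
  by_cases h1 : p ∣ l₁
  · have hpl : p ∣ l := h1.trans hdvd₁
    rw [local_l₁ hp h2 h1 hσ, etaP, if_neg h2, if_pos h1, if_pos hpl]
    field_simp
    ring
  by_cases hl : p ∣ l
  · rw [local_l hp h2 h1 hl hσ, etaP, if_neg h2, if_neg h1, if_pos hl, if_pos hl,
      cpow_neg_two_mul hp.pos.ne' s]
    field_simp
    ring
  · rw [local_gen hp h2 h1 hl hσ, etaP_generic hp.pos.ne' h2 h1 hl s, if_neg hl, one_mul]
    field_simp [hne, hq]
    ring

def primeEmb (l : ℕ) : {q // q ∈ l.primeFactors} ↪ Nat.Primes where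
  toFun q := ⟨q.1, Nat.prime_of_mem_primeFactors q.2⟩
  inj' a b h := by
    apply Subtype.ext
    have := congrArg (fun z : Nat.Primes => (z : ℕ)) h
    simpa using this

def primesOf (l : ℕ) : Finset Nat.Primes := l.primeFactors.attach.map (primeEmb l)

lemma notmem_primesOf {l : ℕ} (hl : l ≠ 0) {p : Nat.Primes} (h : p ∉ primesOf l) :
    ¬((p : ℕ) ∣ l) := by
  intro hdvd
  apply h
  have hq : (p : ℕ) ∈ l.primeFactors := Nat.mem_primeFactors.mpr ⟨p.2, hdvd, hl⟩
  exact Finset.mem_map.mpr ⟨⟨(p : ℕ), hq⟩, Finset.mem_attach _ _, Subtype.ext rfl⟩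

lemma tprod_Cfun (l : ℕ) (hl : l ≠ 0) :
    ∏' p : Nat.Primes, (if (p : ℕ) ∣ l then (((p : ℕ) : ℂ)) / (((p : ℕ) : ℂ) + 1) else 1)
      = ∏ q ∈ l.primeFactors, ((q : ℂ) / ((q : ℂ) + 1)) := by
  rw [tprod_eq_prod (s := primesOf l) (fun p hp => if_neg (notmem_primesOf hl hp))]
  rw [primesOf, Finset.prod_map]
  simp only [primeEmb, Function.Embedding.coeFn_mk]
  rw [← Finset.prod_attach (l.primeFactors) (fun q => ((q : ℂ) / ((q : ℂ) + 1)))]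
  exact Finset.prod_congr rfl fun q _ => if_pos (Nat.dvd_of_mem_primeFactors q.2)

lemma multipliable_Cfun (l : ℕ) (hl : l ≠ 0) :
    Multipliable (fun p : Nat.Primes =>
      (if (p : ℕ) ∣ l then (((p : ℕ) : ℂ)) / (((p : ℕ) : ℂ) + 1) else 1)) :=
  multipliable_of_ne_finset_one (s := primesOf l)
    (fun p hp => if_neg (notmem_primesOf hl hp))

end Stmt11Aux

open Stmt11Aux in
/-- Lemma 5.1: for `Re(s) > 1`,
`∑_{m odd} d(l₁m²) m^{-s} ∏_{p ∣ lm} p/(p+1) = d(l₁) ζ(s)³ η(s; l)`, where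
`η(s; l) = ∏_p η_p(s; l)` converges absolutely for `Re(s) > 1/2`. -/
theorem stmt11 (l l₁ l₂ : ℕ) (hl₁ : Odd l₁) (hl₂ : Odd l₂) (hsf : Squarefree l₁)
    (hfact : l = l₁ * l₂ ^ 2) (s : ℂ) (hs : 1 < s.re) :
    Summable (fun m : ℕ =>
      if Odd m then ((l₁ * m ^ 2).divisors.card : ℂ) * (m : ℂ) ^ (-s) *
        ∏ p ∈ (l * m).primeFactors, ((p : ℂ) / ((p : ℂ) + 1))
      else 0) ∧
    (∑' m : ℕ,
      if Odd m then ((l₁ * m ^ 2).divisors.card : ℂ) * (m : ℂ) ^ (-s) *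
        ∏ p ∈ (l * m).primeFactors, ((p : ℂ) / ((p : ℂ) + 1))
      else 0) =
      (l₁.divisors.card : ℂ) * (riemannZeta s) ^ 3 * ∏' p : Nat.Primes, etaP l l₁ s (p : ℕ) ∧
    ∀ s' : ℂ, 1 / 2 < s'.re → Multipliable (fun p : Nat.Primes => etaP l l₁ s' (p : ℕ)) := by
  have hl₁0 : l₁ ≠ 0 := by rintro rfl; simp at hl₁
  have hl₂0 : l₂ ≠ 0 := by rintro rfl; simp at hl₂
  have hlodd : Odd l := hfact ▸ hl₁.mul (hl₂.pow)
  have hl0 : l ≠ 0 := by rintro rfl; simp at hlodd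
  have hdvd₁ : l₁ ∣ l := hfact ▸ Dvd.intro _ rfl
  have hfe : (fun m : ℕ => if Odd m then ((l₁ * m ^ 2).divisors.card : ℂ) * (m : ℂ) ^ (-s) *
        ∏ p ∈ (l * m).primeFactors, ((p : ℂ) / ((p : ℂ) + 1)) else 0)
      = fun m => (((l₁.divisors.card : ℂ)
          * ∏ p ∈ l.primeFactors, ((p : ℂ) / ((p : ℂ) + 1))) * G l l₁ s m) :=
    funext (f_eq l l₁ l₂ hl₁ hl₂ hsf hfact s)
  have hsumG : Summable (fun n => ‖G l l₁ s n‖) := summable_norm_G l l₁ hs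
  have hEP := EulerProduct.eulerProduct_hasProd (f := G l l₁ s) (G_one l l₁ s)
    (fun h => G_mul l l₁ s h) hsumG (G_zero l l₁ s)
  have hMH : Multipliable (fun p : Nat.Primes => ∑' e : ℕ, G l l₁ s ((p : ℕ) ^ e)) :=
    hEP.multipliable
  have hTH : ∏' p : Nat.Primes, (∑' e : ℕ, G l l₁ s ((p : ℕ) ^ e)) = ∑' n, G l l₁ s n :=
    hEP.tprod_eq
  have hZ := riemannZeta_eulerProduct_hasProd hs
  have hMz : Multipliable (fun p : Nat.Primes => (1 - ((p : ℕ) : ℂ) ^ (-s))⁻¹) := hZ.multipliable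
  have hTz : ∏' p : Nat.Primes, (1 - ((p : ℕ) : ℂ) ^ (-s))⁻¹ = riemannZeta s := hZ.tprod_eq
  have hMeta : ∀ s' : ℂ, 1 / 2 < s'.re →
      Multipliable (fun p : Nat.Primes => etaP l l₁ s' (p : ℕ)) :=
    fun s' hs' => multipliable_etaP l l₁ hl0 hdvd₁ hs'
  refine ⟨?_, ?_, hMeta⟩
  · rw [hfe]
    exact hsumG.of_norm.mul_left _
  · rw [hfe, tsum_mul_left]
    have hMetaS := hMeta s (by linarith)
    set z : Nat.Primes → ℂ := fun p => (1 - ((p : ℕ) : ℂ) ^ (-s))⁻¹ with hzdef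
    set C : Nat.Primes → ℂ :=
      fun p => (if (p : ℕ) ∣ l then (((p : ℕ) : ℂ)) / (((p : ℕ) : ℂ) + 1) else 1) with hCdef
    set H : Nat.Primes → ℂ := fun p => ∑' e : ℕ, G l l₁ s ((p : ℕ) ^ e) with hHdef
    have hCH : ∀ p : Nat.Primes, z p * z p * z p * etaP l l₁ s (p : ℕ) = C p * H p := by
      intro p
      have hli := local_identity l l₁ hlodd hdvd₁ hs p.2
      calc z p * z p * z p * etaP l l₁ s (p : ℕ)
          = ((1 - ((p : ℕ) : ℂ) ^ (-s))⁻¹) ^ 3 * etaP l l₁ s (p : ℕ) := by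
            rw [hzdef]; ring
        _ = C p * H p := hli
    have hMzz : Multipliable (fun p => z p * z p) := hMz.mul hMz
    have hMzzz : Multipliable (fun p => z p * z p * z p) := hMzz.mul hMz
    have E1 : ∏' p, (z p * z p * z p * etaP l l₁ s (p : ℕ))
        = (∏' p, (z p * z p * z p)) * ∏' p : Nat.Primes, etaP l l₁ s (p : ℕ) :=
      Multipliable.tprod_mul hMzzz hMetaS
    have E2 : ∏' p, (z p * z p * z p) = (∏' p, z p) * (∏' p, z p) * (∏' p, z p) := by
      rw [Multipliable.tprod_mul hMzz hMz, Multipliable.tprod_mul hMz hMz]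
    have E3 : ∏' p, (z p * z p * z p * etaP l l₁ s (p : ℕ)) = ∏' p, (C p * H p) :=
      tprod_congr hCH
    have E4 : ∏' p, (C p * H p) = (∏' p, C p) * (∏' p, H p) :=
      Multipliable.tprod_mul (multipliable_Cfun l hl0) hMH
    calc ((l₁.divisors.card : ℂ) * ∏ p ∈ l.primeFactors, ((p : ℂ) / ((p : ℂ) + 1)))
          * ∑' n, G l l₁ s n
        = (l₁.divisors.card : ℂ)
          * ((∏ p ∈ l.primeFactors, ((p : ℂ) / ((p : ℂ) + 1))) * ∑' n, G l l₁ s n) := by ring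
      _ = (l₁.divisors.card : ℂ) * ((∏' p, C p) * (∏' p, H p)) := by
          rw [hCdef, tprod_Cfun l hl0, hHdef, hTH]
      _ = (l₁.divisors.card : ℂ) * (∏' p, (C p * H p)) := by rw [E4]
      _ = (l₁.divisors.card : ℂ) * (∏' p, (z p * z p * z p * etaP l l₁ s (p : ℕ))) := by
          rw [E3]
      _ = (l₁.divisors.card : ℂ)
          * ((∏' p, z p) * (∏' p, z p) * (∏' p, z p)
            * ∏' p : Nat.Primes, etaP l l₁ s (p : ℕ)) := by rw [E1, E2]
      _ = (l₁.divisors.card : ℂ) * (riemannZeta s) ^ 3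
          * ∏' p : Nat.Primes, etaP l l₁ s (p : ℕ) := by rw [hzdef] at hTz ⊢; rw [hTz]; ring
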